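/- Let F and G be disjoint closed subsets of M = ℕ × [0,1], and let ℬ be the lattice of closed subsets of [0,1] generated by closed intervals with rational endpoints. Then there exist B, C ∈ ℬ^ℕ such that F ⊆ F_B, G ⊆ F_C, and F_B ∩ F_C = ∅, where F_B = ⋃_{k∈ℕ} {k} × B(k). -/

import Mathlib

open scoped unitInterval

/-- The lattice `ℬ` of closed subsets of `[0,1]` generated under finite unions and
intersections by the closed intervals with rational endpoints (together with `∅` and
`[0,1]`). -/
inductive GenLat : Set I → Prop
  | empty : GenLat ∅
  | univ : GenLat Set.univ
  | icc (a b : I) (ha : ∃ q : ℚ, (a : ℝ) = q) (hb : ∃ q : ℚ, (b : ℝ) = q) :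
      GenLat (Set.Icc a b)
  | union {s t : Set I} : GenLat s → GenLat t → GenLat (s ∪ t)
  | inter {s t : Set I} : GenLat s → GenLat t → GenLat (s ∩ t)


noncomputable def pt (n j : ℕ) : I := Set.projIcc 0 1 zero_le_one ((j : ℝ) / n)

lemma pt_coe (n j : ℕ) : (pt n j : ℝ) = max 0 (min 1 ((j:ℝ)/n)) := by
  simp [pt, Set.projIcc]

lemma pt_rat (n j : ℕ) : ∃ q : ℚ, (pt n j : ℝ) = q := by
  refine ⟨max 0 (min 1 ((j:ℚ)/(n:ℚ))), ?_⟩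
  rw [pt_coe]; push_cast; ring_nf

lemma clamp_lip {u v : ℝ} (h : v ≤ u) :
    max 0 (min 1 u) - max 0 (min 1 v) ≤ u - v := by
  rcases le_total u 1 with h1 | h1 <;> rcases le_total v 1 with h2 | h2 <;>
    rcases le_total u 0 with h3 | h3 <;> rcases le_total v 0 with h4 | h4 <;>
      simp [max_def, min_def] <;> split_ifs <;> linarith

/-- The grid intervals. -/
noncomputable def J (n j : ℕ) : Set I := Set.Icc (pt n j) (pt n (j + 1))

lemma genLat_J (n j : ℕ) : GenLat (J n j) := GenLat.icc _ _ (pt_rat n j) (pt_rat n (j+1)) 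

/-- points of the same grid interval are within `1/n`. -/
lemma dist_le_of_mem_J {n j : ℕ} (hn : 0 < n) {x y : I} (hx : x ∈ J n j) (hy : y ∈ J n j) :
    dist x y ≤ 1 / n := by
  have hb : (pt n (j+1) : ℝ) - (pt n j : ℝ) ≤ 1 / n := by
    rw [pt_coe, pt_coe]
    have h : ((j:ℝ))/n ≤ ((j+1:ℕ):ℝ)/n := by
      apply div_le_div_of_nonneg_right ?_ (by positivity)
      push_cast; linarith
    calc max 0 (min 1 (((j+1:ℕ):ℝ)/n)) - max 0 (min 1 ((j:ℝ)/n))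
        ≤ ((j+1:ℕ):ℝ)/n - (j:ℝ)/n := clamp_lip h
      _ = 1 / n := by push_cast; ring
  obtain ⟨hx1, hx2⟩ := hx
  obtain ⟨hy1, hy2⟩ := hy
  rw [Subtype.dist_eq, Real.dist_eq, abs_le]
  have hx1' : (pt n j : ℝ) ≤ x := hx1
  have hx2' : (x : ℝ) ≤ pt n (j+1) := hx2
  have hy1' : (pt n j : ℝ) ≤ y := hy1
  have hy2' : (y : ℝ) ≤ pt n (j+1) := hy2
  constructor <;> linarith

/-- every point lies in some grid interval. -/
lemma exists_mem_J {n : ℕ} (hn : 0 < n) (x : I) : ∃ j < n, x ∈ J n j := by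
  have hx0 : (0:ℝ) ≤ x := x.2.1
  have hx1 : (x:ℝ) ≤ 1 := x.2.2
  have hnR : (0:ℝ) < n := by exact_mod_cast hn
  refine ⟨min ⌊(x:ℝ) * n⌋₊ (n-1), ?_, ?_, ?_⟩
  · have : n - 1 < n := Nat.sub_lt hn one_pos
    exact lt_of_le_of_lt (min_le_right _ _) this
  · -- pt n j ≤ x
    show (pt n _ : ℝ) ≤ (x:ℝ)
    rw [pt_coe]
    refine max_le hx0 (le_trans (min_le_right _ _) ?_)
    rw [div_le_iff₀ hnR]
    calc ((min ⌊(x:ℝ) * n⌋₊ (n-1) : ℕ) : ℝ) ≤ (⌊(x:ℝ) * n⌋₊ : ℝ) := by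
          exact_mod_cast min_le_left _ _
      _ ≤ (x:ℝ) * n := Nat.floor_le (by positivity)
  · -- x ≤ pt n (j+1)
    show (x:ℝ) ≤ (pt n _ : ℝ)
    rw [pt_coe]
    rcases le_total (⌊(x:ℝ) * n⌋₊) (n-1) with h | h
    · rw [min_eq_left h]
      refine le_max_of_le_right (le_min hx1 ?_)
      rw [le_div_iff₀ hnR]
      have := Nat.lt_succ_floor ((x:ℝ) * n)
      push_cast at this ⊢
      linarith [this.le]
    · rw [min_eq_right h]
      refine le_max_of_le_right (le_min hx1 ?_)
      have : ((n - 1 + 1 : ℕ) : ℝ) = n := by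
        have := Nat.succ_pred_eq_of_pos hn
        exact_mod_cast congrArg (Nat.cast : ℕ → ℝ) this
      rw [this, div_self hnR.ne']
      exact hx1

lemma genLat_biUnion (s : Finset ℕ) (f : ℕ → Set I) (hf : ∀ j, GenLat (f j)) :
    GenLat (⋃ j ∈ s, f j) := by
  classical
  induction s using Finset.induction with
  | empty => simpa using GenLat.empty
  | insert _ _ h ih =>
      rw [Finset.set_biUnion_insert]
      exact GenLat.union (hf _) ih

/-- disjoint closed sets in `I` are at positive distance. -/
lemma exists_dist_pos {A A' : Set I} (hA : IsClosed A) (hA' : IsClosed A')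
    (h : Disjoint A A') (hne : A.Nonempty) (hne' : A'.Nonempty) :
    ∃ d > 0, ∀ x ∈ A, ∀ y ∈ A', d ≤ dist x y := by
  have hAc : IsCompact A := hA.isCompact
  obtain ⟨x0, hx0, hmin⟩ := hAc.exists_isMinOn hne
    ((Metric.continuous_infDist_pt A').continuousOn)
  have hx0' : x0 ∉ A' := fun hx => h.ne_of_mem hx0 hx rfl
  have hpos : 0 < Metric.infDist x0 A' :=
    (hA'.notMem_iff_infDist_pos hne').1 hx0'
  refine ⟨Metric.infDist x0 A', hpos, fun x hx y hy => ?_⟩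
  exact le_trans (hmin hx) (Metric.infDist_le_dist_of_mem hy)

/-- one-slice separation. -/
lemma slice_sep (A A' : Set I) (hA : IsClosed A) (hA' : IsClosed A')
    (h : Disjoint A A') :
    ∃ B C : Set I, GenLat B ∧ GenLat C ∧ A ⊆ B ∧ A' ⊆ C ∧ B ∩ C = ∅ := by
  classical
  rcases A.eq_empty_or_nonempty with rfl | hne
  · exact ⟨∅, Set.univ, GenLat.empty, GenLat.univ, le_rfl, Set.subset_univ _, by simp⟩
  rcases A'.eq_empty_or_nonempty with rfl | hne'
  · exact ⟨Set.univ, ∅, GenLat.univ, GenLat.empty, Set.subset_univ _, le_rfl, by simp⟩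
  obtain ⟨d, hd, hdist⟩ := exists_dist_pos hA hA' h hne hne'
  obtain ⟨n, hn⟩ := exists_nat_gt (2 / d)
  have hn0 : 0 < n := by
    by_contra hc
    push_neg at hc
    interval_cases n
    simp at hn
    have := div_pos (by norm_num : (0:ℝ) < 2) hd
    linarith
  have hnR : (0:ℝ) < n := by exact_mod_cast hn0
  have hmesh : 2 / n < d := by
    rw [div_lt_iff₀ hnR]
    rw [div_lt_iff₀ hd] at hn
    linarith
  set S : Finset ℕ := (Finset.range n).filter (fun j => (J n j ∩ A).Nonempty) with hS
  set B : Set I := ⋃ j ∈ S, J n j with hB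
  set T : Finset ℕ := (Finset.range n).filter (fun j => J n j ∩ B = ∅) with hT
  set C : Set I := ⋃ j ∈ T, J n j with hC
  refine ⟨B, C, genLat_biUnion _ _ (genLat_J n), genLat_biUnion _ _ (genLat_J n), ?_, ?_, ?_⟩
  · -- A ⊆ B
    intro x hx
    obtain ⟨j, hj, hxj⟩ := exists_mem_J hn0 x
    exact Set.mem_biUnion (Finset.mem_filter.2 ⟨Finset.mem_range.2 hj, ⟨x, hxj, hx⟩⟩) hxj
  · -- A' ⊆ C
    intro x hx
    obtain ⟨j, hj, hxj⟩ := exists_mem_J hn0 x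
    refine Set.mem_biUnion (Finset.mem_filter.2 ⟨Finset.mem_range.2 hj, ?_⟩) hxj
    -- J n j ∩ B = ∅
    by_contra hcne
    obtain ⟨y, hyJ, hyB⟩ := Set.nonempty_iff_ne_empty.2 hcne
    obtain ⟨j', hj'S, hyj'⟩ := Set.mem_iUnion₂.1 hyB
    obtain ⟨z, hzJ, hzA⟩ := (Finset.mem_filter.1 hj'S).2
    have h1 : dist x y ≤ 1 / n := dist_le_of_mem_J hn0 hxj hyJ
    have h2 : dist y z ≤ 1 / n := dist_le_of_mem_J hn0 hyj' hzJ
    have h3 : d ≤ dist z x := hdist z hzA x hx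
    have := dist_triangle x y z
    rw [dist_comm z x] at h3
    have h4 : 2/(n:ℝ) = 1/n + 1/n := by ring
    linarith
  · -- B ∩ C = ∅
    ext x
    simp only [Set.mem_inter_iff, Set.mem_empty_iff_false, iff_false]
    rintro ⟨hxB, hxC⟩
    obtain ⟨j, hjT, hxj⟩ := Set.mem_iUnion₂.1 hxC
    have := (Finset.mem_filter.1 hjT).2
    exact absurd this (Set.nonempty_iff_ne_empty.1 ⟨x, hxj, hxB⟩)

/-- For disjoint closed `F, G ⊆ M = ℕ × [0,1]` there are `B, C ∈ ℬ^ℕ` with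
`F ⊆ F_B`, `G ⊆ F_C` and `F_B ∩ F_C = ∅`, where `F_B = ⋃_k {k} × B(k)`. -/
theorem separate_closed_sets (F G : Set (ℕ × I)) (hF : IsClosed F) (hG : IsClosed G)
    (hFG : Disjoint F G) :
    ∃ B C : ℕ → Set I, (∀ k, GenLat (B k)) ∧ (∀ k, GenLat (C k)) ∧
      F ⊆ {p : ℕ × I | p.2 ∈ B p.1} ∧ G ⊆ {p : ℕ × I | p.2 ∈ C p.1} ∧
      {p : ℕ × I | p.2 ∈ B p.1} ∩ {p : ℕ × I | p.2 ∈ C p.1} = ∅ := by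
  have key : ∀ k : ℕ, ∃ B C : Set I, GenLat B ∧ GenLat C ∧
      {x : I | (k, x) ∈ F} ⊆ B ∧ {x : I | (k, x) ∈ G} ⊆ C ∧ B ∩ C = ∅ := by
    intro k
    have hc : Continuous (fun x : I => (k, x)) := by continuity
    refine slice_sep _ _ (hF.preimage hc) (hG.preimage hc) ?_
    rw [Set.disjoint_left]
    intro x hx hx'
    exact Set.disjoint_left.1 hFG hx hx'
  choose B C hB hC hFB hGC hBC using key
  refine ⟨B, C, hB, hC, fun p hp => hFB p.1 hp, fun p hp => hGC p.1 hp, ?_⟩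
  ext p
  simp only [Set.mem_inter_iff, Set.mem_setOf_eq, Set.mem_empty_iff_false, iff_false]
  rintro ⟨h1, h2⟩
  have := hBC p.1
  rw [Set.eq_empty_iff_forall_notMem] at this
  exact this p.2 ⟨h1, h2⟩
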